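/- Let A = P − (1/m)I where P is the rank-one projection onto the first coordinate of ℂ^m. Suppose A = BC − CB with ‖B‖ = 1, and let H₀, H₁, … be orthogonal subspaces spanning ℂ^m with H₀ = range(P), with orthogonal projections Pₗ onto Hₗ satisfying PᵢBPⱼ = PᵢCPⱼ = 0 for i > j+1. Then for every n ≥ 0: 1 − (1/m)∑_{k=0}^n rank(Pₖ) ≤ ‖P_{n+1}CPₙ‖₁ + ‖PₙCP_{n+1}‖₁. -/

import Mathlib

open scoped ComplexOrder

noncomputable def opNorm {m : ℕ} (A : Matrix (Fin m) (Fin m) ℂ) : ℝ :=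
  ‖Matrix.toEuclideanCLM (𝕜 := ℂ) (n := Fin m) A‖

noncomputable def singVal {m : ℕ} (M : Matrix (Fin m) (Fin m) ℂ) (i : Fin m) : ℝ :=
  Real.sqrt ((Matrix.posSemidef_conjTranspose_mul_self M).1.eigenvalues i)

/-- The trace norm: the sum of the singular values. -/
noncomputable def traceNorm {m : ℕ} (M : Matrix (Fin m) (Fin m) ℂ) : ℝ :=
  ∑ i, singVal M i

namespace Stmt14Aux

open Matrix

variable {m : ℕ}

lemma traceNorm_nonneg (M : Matrix (Fin m) (Fin m) ℂ) : 0 ≤ traceNorm M :=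
  Finset.sum_nonneg fun _ _ => Real.sqrt_nonneg _

lemma opNorm_mul_le (A B : Matrix (Fin m) (Fin m) ℂ) : opNorm (A * B) ≤ opNorm A * opNorm B := by
  unfold opNorm; rw [_root_.map_mul]; exact norm_mul_le _ _

lemma opNorm_proj_le {Q : Matrix (Fin m) (Fin m) ℂ} (h1 : Q.IsHermitian) (h2 : Q * Q = Q) :
    opNorm Q ≤ 1 := by
  set f := Matrix.toEuclideanCLM (𝕜 := ℂ) (n := Fin m) Q with hf
  have hf2 : f * f = f := by rw [hf, ← _root_.map_mul, h2]
  have hfs : star f = f := by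
    rw [hf, ← map_star]
    exact congrArg _ ((Matrix.star_eq_conjTranspose Q).trans h1)
  refine ContinuousLinearMap.opNorm_le_bound f zero_le_one (fun x => ?_)
  rw [one_mul]
  rcases eq_or_lt_of_le (norm_nonneg (f x)) with h0 | h0
  · rw [← h0]; exact norm_nonneg x
  have hsq : ‖f x‖ ^ 2 = RCLike.re (inner (𝕜 := ℂ) x (f x)) := by
    rw [← inner_self_eq_norm_sq (𝕜 := ℂ)]
    have h3 : f (f x) = f x := by rw [← ContinuousLinearMap.mul_apply, hf2]
    rw [← ContinuousLinearMap.adjoint_inner_right, ← ContinuousLinearMap.star_eq_adjoint, hfs, h3]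
  have hle : RCLike.re (inner (𝕜 := ℂ) x (f x)) ≤ ‖x‖ * ‖f x‖ := by
    calc RCLike.re (inner (𝕜 := ℂ) x (f x)) ≤ ‖(inner (𝕜 := ℂ) x (f x) : ℂ)‖ := by
          exact RCLike.re_le_norm _
      _ ≤ ‖x‖ * ‖f x‖ := norm_inner_le_norm _ _
  nlinarith [hsq, hle]

lemma trace_eq_rank {Q : Matrix (Fin m) (Fin m) ℂ} (h2 : Q * Q = Q) :
    Q.trace = (Q.rank : ℂ) := by
  have hf : Q.mulVecLin ∘ₗ Q.mulVecLin = Q.mulVecLin := by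
    rw [← Matrix.mulVecLin_mul, h2]
  have hproj : LinearMap.IsProj (LinearMap.range Q.mulVecLin) Q.mulVecLin := by
    refine ⟨fun x => LinearMap.mem_range_self _ x, fun x hx => ?_⟩
    obtain ⟨y, rfl⟩ := hx
    exact LinearMap.congr_fun hf y
  have ht := LinearMap.IsProj.trace hproj
  rw [Matrix.rank, ← ht, LinearMap.trace_eq_matrix_trace ℂ (Pi.basisFun ℂ (Fin m)),
    LinearMap.toMatrix_eq_toMatrix']
  congr 1
  rw [← Matrix.toLin'_apply', LinearMap.toMatrix'_toLin']

lemma inner_piLp_equiv_symm' {𝕜 ι : Type*} [RCLike 𝕜] [Fintype ι] (x y : ι → 𝕜) :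
    inner 𝕜 ((WithLp.equiv 2 (ι → 𝕜)).symm x) ((WithLp.equiv 2 (ι → 𝕜)).symm y)
      = dotProduct (star x) y := by
  rw [dotProduct_comm]; rfl

lemma toEuclideanCLM_piLp_equiv_symm' (A : Matrix (Fin m) (Fin m) ℂ) (x : Fin m → ℂ) :
    Matrix.toEuclideanCLM (𝕜 := ℂ) (n := Fin m) A ((WithLp.equiv 2 (Fin m → ℂ)).symm x)
      = (WithLp.equiv 2 (Fin m → ℂ)).symm (Matrix.toLin' A x) := rfl

lemma trace_abs_le (X Y : Matrix (Fin m) (Fin m) ℂ) :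
    ‖(X * Y).trace‖ ≤ opNorm X * traceNorm Y := by
  classical
  set hH := (Matrix.posSemidef_conjTranspose_mul_self Y).1 with hHdef
  set W : Matrix (Fin m) (Fin m) ℂ := (hH.eigenvectorUnitary : Matrix (Fin m) (Fin m) ℂ) with hW
  set u : Fin m → Fin m → ℂ := fun i => WithLp.equiv 2 (Fin m → ℂ) (hH.eigenvectorBasis i) with hu
  have hWu : ∀ k i, W k i = u i k := fun k i => hH.eigenvectorUnitary_apply k i
  have hWW : W * star W = 1 := (Matrix.mem_unitaryGroup_iff).mp hH.eigenvectorUnitary.2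
  have hnorm1 : ∀ i, ‖hH.eigenvectorBasis i‖ = 1 := fun i => hH.eigenvectorBasis.orthonormal.1 i
  have hsymmu : ∀ i, (WithLp.equiv 2 (Fin m → ℂ)).symm (u i) = hH.eigenvectorBasis i := by
    intro i; rw [hu]; exact (WithLp.equiv 2 (Fin m → ℂ)).symm_apply_apply _
  have htr : (X * Y).trace = ∑ i, dotProduct (star (u i)) ((X * Y) *ᵥ u i) := by
    have h1 : (X * Y).trace = (star W * (X * Y) * W).trace := by
      rw [Matrix.trace_mul_cycle, ← mul_assoc, hWW, one_mul]
    rw [h1, Matrix.trace]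
    refine Finset.sum_congr rfl fun i _ => ?_
    simp only [Matrix.diag_apply, Matrix.mul_apply, Matrix.mulVec, dotProduct,
      Matrix.star_eq_conjTranspose, Matrix.conjTranspose_apply, hWu, Finset.sum_mul,
      Finset.mul_sum, Pi.star_apply, RCLike.star_def]
    rw [Finset.sum_comm]
    exact Finset.sum_congr rfl fun k _ => Finset.sum_congr rfl fun j _ =>
      Finset.sum_congr rfl fun x _ => by ring
  have hterm : ∀ i, ‖dotProduct (star (u i)) ((X * Y) *ᵥ u i)‖ ≤ opNorm X * singVal Y i := by
    intro i
    have hinner : dotProduct (star (u i)) ((X * Y) *ᵥ u i)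
        = inner (𝕜 := ℂ) (hH.eigenvectorBasis i)
            ((WithLp.equiv 2 (Fin m → ℂ)).symm ((X * Y) *ᵥ u i)) := by
      rw [← inner_piLp_equiv_symm', hsymmu]
    have hYv : ‖(WithLp.equiv 2 (Fin m → ℂ)).symm (Y *ᵥ u i)‖ = singVal Y i := by
      have hsq : inner (𝕜 := ℂ) ((WithLp.equiv 2 (Fin m → ℂ)).symm (Y *ᵥ u i))
          ((WithLp.equiv 2 (Fin m → ℂ)).symm (Y *ᵥ u i)) = (hH.eigenvalues i : ℂ) := by
        have hev : (Yᴴ * Y) *ᵥ u i = hH.eigenvalues i • u i := hH.mulVec_eigenvectorBasis i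
        rw [inner_piLp_equiv_symm', Matrix.star_mulVec,
          Matrix.dotProduct_mulVec, Matrix.vecMul_vecMul, ← Matrix.dotProduct_mulVec,
          hev]
        rw [dotProduct_smul]
        have h2 : dotProduct (star (u i)) (u i) = 1 := by
          have := inner_piLp_equiv_symm' (𝕜 := ℂ) (u i) (u i)
          rw [hsymmu] at this
          rw [← this, inner_self_eq_norm_sq_to_K, hnorm1]
          norm_num
        rw [h2]
        simp [Complex.real_smul]
      have h3 := hsq
      rw [inner_self_eq_norm_sq_to_K] at h3
      have h4 : ‖(WithLp.equiv 2 (Fin m → ℂ)).symm (Y *ᵥ u i)‖ ^ 2 = hH.eigenvalues i := by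
        norm_cast at h3
        exact Complex.ofReal_inj.mp h3
      rw [singVal, ← h4, Real.sqrt_sq (norm_nonneg _)]
    rw [hinner]
    calc ‖inner (𝕜 := ℂ) (hH.eigenvectorBasis i)
          ((WithLp.equiv 2 (Fin m → ℂ)).symm ((X * Y) *ᵥ u i))‖
        ≤ ‖hH.eigenvectorBasis i‖ * ‖(WithLp.equiv 2 (Fin m → ℂ)).symm ((X * Y) *ᵥ u i)‖ :=
          norm_inner_le_norm _ _
      _ = ‖(WithLp.equiv 2 (Fin m → ℂ)).symm (X *ᵥ (Y *ᵥ u i))‖ := by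
          rw [hnorm1, one_mul, ← Matrix.mulVec_mulVec]
      _ = ‖Matrix.toEuclideanCLM (𝕜 := ℂ) (n := Fin m) X
            ((WithLp.equiv 2 (Fin m → ℂ)).symm (Y *ᵥ u i))‖ := by
          rw [toEuclideanCLM_piLp_equiv_symm', Matrix.toLin'_apply]
      _ ≤ opNorm X * ‖(WithLp.equiv 2 (Fin m → ℂ)).symm (Y *ᵥ u i)‖ :=
          ContinuousLinearMap.le_opNorm _ _
      _ = opNorm X * singVal Y i := by rw [hYv]
  calc ‖(X * Y).trace‖ = ‖∑ i, dotProduct (star (u i)) ((X * Y) *ᵥ u i)‖ := by rw [htr]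
    _ ≤ ∑ i, ‖dotProduct (star (u i)) ((X * Y) *ᵥ u i)‖ := norm_sum_le _ _
    _ ≤ ∑ i, opNorm X * singVal Y i := Finset.sum_le_sum fun i _ => hterm i
    _ = opNorm X * traceNorm Y := by rw [traceNorm, Finset.mul_sum]

end Stmt14Aux

set_option maxHeartbeats 2000000 in
/-- Let `A = P₀ - (1/m) I = BC - CB` with `‖B‖ = 1`, where `P₀` is the rank-one projection
onto the first coordinate, and let `(Pₖ)` be the orthogonal projections onto mutually
orthogonal subspaces `Hₖ` spanning `ℂ^m` with `H₀ = range P₀`, satisfying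
`Pᵢ B Pⱼ = Pᵢ C Pⱼ = 0` for `i > j + 1`. Then for all `n`,
`1 - (1/m) ∑_{k≤n} rank Pₖ ≤ ‖P_{n+1} C Pₙ‖₁ + ‖Pₙ C P_{n+1}‖₁`. -/
theorem stmt14 {m : ℕ} (hm : 1 ≤ m)
    (B C : Matrix (Fin m) (Fin m) ℂ)
    (P : ℕ → Matrix (Fin m) (Fin m) ℂ)
    (hP0 : P 0 = Matrix.single (⟨0, by omega⟩ : Fin m) (⟨0, by omega⟩ : Fin m) 1)
    (hproj : ∀ k, (P k).IsHermitian ∧ P k * P k = P k)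
    (horth : ∀ i j, i ≠ j → P i * P j = 0)
    (hspan : ∃ N : ℕ, (∀ n, N < n → P n = 0) ∧ ∑ n ∈ Finset.range (N + 1), P n = 1)
    (hA : P 0 - ((1 : ℂ) / m) • 1 = B * C - C * B)
    (hB : opNorm B = 1)
    (hBzero : ∀ i j, j + 1 < i → P i * B * P j = 0)
    (hCzero : ∀ i j, j + 1 < i → P i * C * P j = 0) :
    ∀ n : ℕ,
      1 - (1 / (m : ℝ)) * ∑ k ∈ Finset.range (n + 1), ((P k).rank : ℝ) ≤
        traceNorm (P (n + 1) * C * P n) + traceNorm (P n * C * P (n + 1)) := by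
  classical
  intro n
  obtain ⟨N, hN0, hNsum⟩ := hspan
  set Q : Matrix (Fin m) (Fin m) ℂ := ∑ k ∈ Finset.range (n + 1), P k with hQdef
  have hherm : ∀ k, (P k).conjTranspose = P k := fun k => (hproj k).1
  have hidem : ∀ k, P k * P k = P k := fun k => (hproj k).2
  have hQherm : Q.IsHermitian := by
    show Q.conjTranspose = Q
    rw [hQdef, Matrix.conjTranspose_sum]
    exact Finset.sum_congr rfl fun k _ => hherm k
  have hQidem : Q * Q = Q := by
    rw [hQdef, Finset.sum_mul_sum]
    refine Finset.sum_congr rfl fun i hi => ?_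
    rw [Finset.sum_eq_single i (fun j _ hji => horth i j (fun h => hji h.symm)) (fun h => absurd hi h)]
    exact hidem i
  have hQP : ∀ k, k ≤ n → Q * P k = P k ∧ P k * Q = P k := by
    intro k hk
    have hmem : k ∈ Finset.range (n + 1) := Finset.mem_range.mpr (by omega)
    constructor
    · rw [hQdef, Finset.sum_mul]
      rw [Finset.sum_eq_single k (fun j _ hjk => horth j k hjk) (fun h => absurd hmem h)]
      exact hidem k
    · rw [hQdef, Finset.mul_sum]
      rw [Finset.sum_eq_single k (fun j _ hjk => horth k j (fun h => hjk h.symm)) (fun h => absurd hmem h)]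
      exact hidem k
  set M := N + n + 1 with hM
  have hsum' : ∑ k ∈ Finset.range (M + 1), P k = 1 := by
    rw [← hNsum]
    symm
    refine Finset.sum_subset (Finset.range_subset_range.mpr (by omega)) ?_
    intro x hx hnx
    exact hN0 x (by simp only [Finset.mem_range] at hnx; omega)
  have hRQ : (1 : Matrix (Fin m) (Fin m) ℂ) - Q = ∑ k ∈ Finset.Ico (n + 1) (M + 1), P k := by
    rw [← hsum', hQdef, Finset.range_eq_Ico, Finset.range_eq_Ico,
      ← Finset.sum_Ico_consecutive _ (Nat.zero_le (n + 1)) (by omega : n + 1 ≤ M + 1)]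
    abel
  have expand : ∀ (D : Matrix (Fin m) (Fin m) ℂ), (∀ i j, j + 1 < i → P i * D * P j = 0) →
      ((1 : Matrix (Fin m) (Fin m) ℂ) - Q) * D * Q = P (n + 1) * D * P n := by
    intro D hD
    rw [hRQ, Finset.sum_mul, Finset.sum_mul]
    rw [Finset.sum_eq_single (n + 1)]
    · rw [hQdef, Finset.mul_sum]
      rw [Finset.sum_eq_single n]
      · intro j hj hjn
        exact hD (n + 1) j (by simp only [Finset.mem_range] at hj; omega)
      · intro hn; exact absurd (Finset.self_mem_range_succ n) hn
    · intro i hi hin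
      rw [hQdef, Finset.mul_sum]
      refine Finset.sum_eq_zero fun j hj => hD i j ?_
      simp only [Finset.mem_Ico] at hi
      simp only [Finset.mem_range] at hj
      omega
    · intro h
      exact absurd (Finset.mem_Ico.mpr ⟨le_refl _, by omega⟩) h
  set Y1 := P (n + 1) * C * P n with hY1
  set Y2 := P (n + 1) * B * P n with hY2
  have hC1 : (1 - Q) * C * Q = Y1 := expand C hCzero
  have hB1 : (1 - Q) * B * Q = Y2 := expand B hBzero
  have hsplit : Q * (B * C - C * B) * Q
      = (Q * B * Q * C * Q - Q * C * Q * B * Q) + (Q * B * ((1 - Q) * C * Q) - Q * C * ((1 - Q) * B * Q)) := by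
    noncomm_ring
  rw [hC1, hB1] at hsplit
  have cyc : ∀ (U V : Matrix (Fin m) (Fin m) ℂ),
      (Q * U * Q * V * Q).trace = ((U * Q) * (V * Q)).trace := by
    intro U V
    have e1 : Q * U * Q * V * Q = (Q * (U * Q)) * (V * Q) := by noncomm_ring
    rw [e1, Matrix.trace_mul_comm]
    have e2 : (V * Q) * (Q * (U * Q)) = V * (Q * Q) * (U * Q) := by noncomm_ring
    rw [e2, hQidem, Matrix.trace_mul_comm]
  have htrace : (Q * (B * C - C * B) * Q).trace = (Q * B * Y1).trace - (Q * C * Y2).trace := by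
    rw [hsplit, Matrix.trace_add, Matrix.trace_sub, Matrix.trace_sub]
    rw [cyc B C, cyc C B, Matrix.trace_mul_comm (B * Q) (C * Q)]
    ring
  -- value of the trace
  have hQP0 : Q * P 0 = P 0 := by
    rw [hQdef, Finset.sum_mul]
    rw [Finset.sum_eq_single 0 (fun j _ hj0 => horth j 0 hj0)
      (fun h => absurd (Finset.mem_range.mpr (by omega)) h)]
    exact hidem 0
  have hP0Q : P 0 * Q = P 0 := by
    rw [hQdef, Finset.mul_sum]
    rw [Finset.sum_eq_single 0 (fun j _ hj0 => horth 0 j (fun h => hj0 h.symm))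
      (fun h => absurd (Finset.mem_range.mpr (by omega)) h)]
    exact hidem 0
  have hval : (Q * (P 0 - ((1 : ℂ) / m) • 1) * Q).trace
      = 1 - (1 / (m : ℂ)) * ∑ k ∈ Finset.range (n + 1), ((P k).rank : ℂ) := by
    have e : Q * (P 0 - ((1 : ℂ) / m) • 1) * Q = P 0 - ((1 : ℂ) / m) • Q := by
      rw [Matrix.mul_sub, Matrix.sub_mul]
      congr 1
      · rw [hQP0, hP0Q]
      · rw [Matrix.mul_smul, mul_one, Matrix.smul_mul, hQidem]
    rw [e, Matrix.trace_sub, Matrix.trace_smul]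
    have htrP0 : (P 0).trace = 1 := by
      rw [hP0]
      simp [Matrix.trace, Matrix.diag, Matrix.single]
    have htrQ : Q.trace = ∑ k ∈ Finset.range (n + 1), ((P k).rank : ℂ) := by
      rw [hQdef, Matrix.trace_sum]
      exact Finset.sum_congr rfl fun k _ => Stmt14Aux.trace_eq_rank (hidem k)
    rw [htrP0, htrQ, smul_eq_mul]
  -- bounds
  have hopQ : opNorm Q ≤ 1 := Stmt14Aux.opNorm_proj_le hQherm hQidem
  have hopP : ∀ k, opNorm (P k) ≤ 1 := fun k => Stmt14Aux.opNorm_proj_le (hproj k).1 (hproj k).2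
  have hb1 : ‖(Q * B * Y1).trace‖ ≤ traceNorm (P (n + 1) * C * P n) := by
    have e : Q * B * Y1 = (Q * B * P (n + 1)) * (P (n + 1) * C * P n) := by
      rw [hY1]
      have : (Q * B * P (n + 1)) * (P (n + 1) * C * P n)
          = Q * B * (P (n + 1) * P (n + 1)) * C * P n := by noncomm_ring
      rw [this, hidem]
      noncomm_ring
    rw [e]
    calc ‖((Q * B * P (n + 1)) * (P (n + 1) * C * P n)).trace‖
        ≤ opNorm (Q * B * P (n + 1)) * traceNorm (P (n + 1) * C * P n) :=
          Stmt14Aux.trace_abs_le _ _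
      _ ≤ 1 * traceNorm (P (n + 1) * C * P n) := by
          refine mul_le_mul_of_nonneg_right ?_ (Stmt14Aux.traceNorm_nonneg _)
          calc opNorm (Q * B * P (n + 1)) ≤ opNorm (Q * B) * opNorm (P (n + 1)) :=
                Stmt14Aux.opNorm_mul_le _ _
            _ ≤ (opNorm Q * opNorm B) * opNorm (P (n + 1)) :=
                mul_le_mul_of_nonneg_right (Stmt14Aux.opNorm_mul_le _ _) (norm_nonneg _)
            _ ≤ (1 * 1) * 1 := by
                refine mul_le_mul ?_ (hopP _) (norm_nonneg _) (by norm_num)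
                rw [hB]
                exact mul_le_mul_of_nonneg_right hopQ (by rw [← hB]; exact norm_nonneg _)
            _ = 1 := by norm_num
      _ = traceNorm (P (n + 1) * C * P n) := one_mul _
  have hb2 : ‖(Q * C * Y2).trace‖ ≤ traceNorm (P n * C * P (n + 1)) := by
    have hPnQ : P n * Q = P n := (hQP n (le_refl n)).2
    have e0 : (Q * C * Y2).trace = ((B * P n) * (P n * C * P (n + 1))).trace := by
      have e1 : Q * C * Y2 = (Q * C * P (n + 1) * B) * (P n) := by rw [hY2]; noncomm_ring
      rw [e1, Matrix.trace_mul_comm]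
      have e2 : P n * (Q * C * P (n + 1) * B) = ((P n * Q) * C * P (n + 1)) * B := by noncomm_ring
      rw [e2, hPnQ, Matrix.trace_mul_comm]
      congr 1
      have e3 : B * (P n * C * P (n + 1)) = B * ((P n * P n) * C * P (n + 1)) := by rw [hidem]
      rw [e3]
      noncomm_ring
    rw [e0]
    calc ‖((B * P n) * (P n * C * P (n + 1))).trace‖
        ≤ opNorm (B * P n) * traceNorm (P n * C * P (n + 1)) := Stmt14Aux.trace_abs_le _ _
      _ ≤ 1 * traceNorm (P n * C * P (n + 1)) := by
          refine mul_le_mul_of_nonneg_right ?_ (Stmt14Aux.traceNorm_nonneg _)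
          calc opNorm (B * P n) ≤ opNorm B * opNorm (P n) := Stmt14Aux.opNorm_mul_le _ _
            _ ≤ 1 * 1 := by
                rw [hB]
                exact mul_le_mul_of_nonneg_left (hopP n) zero_le_one
            _ = 1 := by norm_num
      _ = traceNorm (P n * C * P (n + 1)) := one_mul _
  -- final assembly
  have hcomplex : (Q * (B * C - C * B) * Q).trace
      = ((1 - (1 / (m : ℝ)) * ∑ k ∈ Finset.range (n + 1), ((P k).rank : ℝ) : ℝ) : ℂ) := by
    rw [← hA, hval]
    push_cast
    ring
  have hstep : (1 : ℝ) - (1 / (m : ℝ)) * ∑ k ∈ Finset.range (n + 1), ((P k).rank : ℝ)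
      ≤ ‖(Q * (B * C - C * B) * Q).trace‖ := by
    rw [hcomplex, Complex.norm_real]
    exact le_abs_self _
  calc (1 : ℝ) - (1 / (m : ℝ)) * ∑ k ∈ Finset.range (n + 1), ((P k).rank : ℝ)
      ≤ ‖(Q * (B * C - C * B) * Q).trace‖ := hstep
    _ = ‖(Q * B * Y1).trace - (Q * C * Y2).trace‖ := by rw [htrace]
    _ ≤ ‖(Q * B * Y1).trace‖ + ‖(Q * C * Y2).trace‖ := norm_sub_le _ _
    _ ≤ traceNorm (P (n + 1) * C * P n) + traceNorm (P n * C * P (n + 1)) := add_le_add hb1 hb2
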